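/- Let k be an even integer with k ≥ 4, let d = (3k+4)/2, and let C be a symmetric (d,k) circuit code of length 4k+6 whose transition sequence has the form T(C) = (ω₁, x, ω₂, ω₁, x, ω₂), where ω₁ = (1,2,...,k+2) and ω₂ = (β₁,...,β_k). Then β_i > i for i = 1,...,k, and β_j ∉ {j+3, j+4, ..., k+2} for j = 1,...,k−1. -/

import Mathlib

/-- The graph of the `d`-dimensional hypercube: vertices are binary vectors of
length `d`, adjacent iff they differ in exactly one coordinate. -/
def hypercube (d : ℕ) : SimpleGraph (Fin d → Bool) where
  Adj x y := hammingDist x y = 1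
  symm := by
    constructor
    intro x y (h : hammingDist x y = 1)
    show hammingDist y x = 1
    rwa [hammingDist_comm]
  loopless := by
    constructor
    intro x (h : hammingDist x x = 1)
    simp [hammingDist_self] at h

/-- Distance along a cycle of length `N` between positions `i` and `j`. -/
def cycDist {N : ℕ} (i j : ZMod N) : ℕ := min (i - j).val (j - i).val

/-- `x : ZMod N → (Fin d → Bool)` is a `(d,k)` circuit code of length `N`:
a cycle in the hypercube `I(d)` satisfying the spread-`k` distance requirement. -/
structure IsCircuitCode (d k N : ℕ) (x : ZMod N → Fin d → Bool) : Prop where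
  inj : Function.Injective x
  adj : ∀ i : ZMod N, (hypercube d).Adj (x i) (x (i + 1))
  spread : ∀ i j : ZMod N, min (cycDist i j) k ≤ (hypercube d).dist (x i) (x j)

/-- `τ` is the transition sequence of the cycle `x`: `τ i` is the unique
coordinate in which `x i` and `x (i+1)` differ. -/
def IsTransitionSeq {d N : ℕ} (x : ZMod N → Fin d → Bool) (τ : ZMod N → Fin d) : Prop :=
  ∀ (i : ZMod N) (j : Fin d), x (i + 1) j ≠ x i j ↔ j = τ i

/-- The segment of `τ` of length `m` starting at position `start` is a bit run:
all of its entries are distinct. -/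
def IsBitRun {d N : ℕ} (τ : ZMod N → Fin d) (start : ZMod N) (m : ℕ) : Prop :=
  ∀ a b : Fin m, τ (start + ((a : ℕ) : ZMod N)) = τ (start + ((b : ℕ) : ZMod N)) → a = b

/-- `δ(ω)`: the number of coordinates appearing an odd number of times in the
segment of `τ` of length `m` starting at `start`. -/
def segDelta {d N : ℕ} (τ : ZMod N → Fin d) (start : ZMod N) (m : ℕ) : ℕ :=
  (Finset.univ.filter fun c : Fin d =>
    Odd (Finset.univ.filter fun t : Fin m => τ (start + ((t : ℕ) : ZMod N)) = c).card).card


open Finset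

lemma hyp_walk (d : ℕ) : ∀ (n : ℕ) (x y : Fin d → Bool), hammingDist x y = n →
    ∃ w : (hypercube d).Walk x y, w.length = n := by
  intro n
  induction n with
  | zero =>
    intro x y h
    obtain rfl := eq_of_hammingDist_eq_zero h
    exact ⟨SimpleGraph.Walk.nil, rfl⟩
  | succ n ih =>
    intro x y h
    have hne : x ≠ y := by
      intro he; rw [he, hammingDist_self] at h; omega
    obtain ⟨j, hj⟩ : ∃ j, x j ≠ y j := Function.ne_iff.mp hne
    set x' := Function.update x j (y j) with hx'
    have hmem : j ∈ ({i | x i ≠ y i} : Finset (Fin d)) := by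
      simp [hj]
    have hset : ({i | x' i ≠ y i} : Finset (Fin d)) = ({i | x i ≠ y i} : Finset (Fin d)) \ {j} := by
      ext i
      rcases eq_or_ne i j with rfl | hij
      · simp [hx', Function.update_self]
      · simp [hx', Function.update_of_ne hij, hij]
    have h1 : hammingDist x' y = n := by
      rw [hammingDist, hset, card_sdiff_of_subset (by simpa using hmem), card_singleton]
      have h' : #(filter (fun i => ¬x i = y i) univ) = n + 1 := by simpa [hammingDist] using h
      simp only [ne_eq] at h' ⊢
      omega
    have hset2 : ({i | x i ≠ x' i} : Finset (Fin d)) = {j} := by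
      ext i
      rcases eq_or_ne i j with rfl | hij
      · simp [hx', Function.update_self, hj]
      · simp [hx', Function.update_of_ne hij, hij]
    have hadj : (hypercube d).Adj x x' := by
      show hammingDist x x' = 1
      rw [hammingDist, hset2, card_singleton]
    obtain ⟨w, hw⟩ := ih x' y h1
    exact ⟨SimpleGraph.Walk.cons hadj w, by simp [hw]⟩

lemma hyp_dist_le (d : ℕ) (x y : Fin d → Bool) :
    (hypercube d).dist x y ≤ hammingDist x y := by
  obtain ⟨w, hw⟩ := hyp_walk d (hammingDist x y) x y rfl
  simpa [hw] using SimpleGraph.dist_le w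

lemma steps_bound {d N : ℕ} {x : ZMod N → Fin d → Bool}
    (hadj : ∀ i : ZMod N, (hypercube d).Adj (x i) (x (i + 1))) :
    ∀ (s : ℕ) (a : ZMod N), hammingDist (x a) (x (a + (s : ZMod N))) ≤ s := by
  intro s
  induction s with
  | zero => intro a; simp
  | succ s ih =>
    intro a
    have hcast : ((s + 1 : ℕ) : ZMod N) = (s : ZMod N) + 1 := by push_cast; ring
    have h1 : hammingDist (x (a + (s : ZMod N))) (x (a + (s : ZMod N) + 1)) = 1 := hadj _
    calc hammingDist (x a) (x (a + ((s + 1 : ℕ) : ZMod N)))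
        ≤ hammingDist (x a) (x (a + (s : ZMod N)))
          + hammingDist (x (a + (s : ZMod N))) (x (a + ((s + 1 : ℕ) : ZMod N))) :=
          hammingDist_triangle _ _ _
      _ ≤ s + 1 := by
          rw [hcast, ← add_assoc]
          exact add_le_add (ih a) (le_of_eq h1)

lemma keyD (k d : ℕ) (x : ZMod (4 * k + 6) → Fin d → Bool)
    (hx : IsCircuitCode d k (4 * k + 6) x)
    (τ : ZMod (4 * k + 6) → Fin d) (hτ : IsTransitionSeq x τ)
    (p : ZMod (4 * k + 6)) (s : ℕ) (hs1 : 1 ≤ s) (hsk : s ≤ k)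
    (heq : τ (p + (s : ZMod (4 * k + 6))) = τ p) : False := by
  haveI : NeZero (4 * k + 6) := ⟨by omega⟩
  -- flip facts at coordinate τ p
  have e1 : x (p + 1) (τ p) = !(x p (τ p)) := by
    have h := (hτ p (τ p)).mpr rfl
    cases h1 : x p (τ p) <;> cases h2 : x (p + 1) (τ p) <;> simp_all
  have e2 : x (p + (s : ZMod (4 * k + 6)) + 1) (τ p) = !(x (p + (s : ZMod (4 * k + 6))) (τ p)) := by
    have h := (hτ (p + (s : ZMod (4 * k + 6))) (τ p)).mpr heq.symm
    cases h1 : x (p + (s : ZMod (4 * k + 6))) (τ p) <;>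
      cases h2 : x (p + (s : ZMod (4 * k + 6)) + 1) (τ p) <;> simp_all
  -- step 1 : hamming equality
  have step1 : hammingDist (x p) (x (p + (s : ZMod (4 * k + 6)) + 1))
      = hammingDist (x (p + 1)) (x (p + (s : ZMod (4 * k + 6)))) := by
    unfold hammingDist
    congr 1
    ext j
    simp only [Finset.mem_filter, Finset.mem_univ, true_and]
    rcases eq_or_ne j (τ p) with rfl | hj
    · rw [e1, e2]
      cases x p (τ p) <;> cases x (p + (s : ZMod (4 * k + 6))) (τ p) <;> simp
    · have f1 : x (p + 1) j = x p j := by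
        by_contra hcon
        exact hj ((hτ p j).mp hcon)
      have f2 : x (p + (s : ZMod (4 * k + 6)) + 1) j = x (p + (s : ZMod (4 * k + 6))) j := by
        by_contra hcon
        exact hj (((hτ (p + (s : ZMod (4 * k + 6))) j).mp hcon).trans heq)
      rw [f1, f2]
  -- step 2 : upper bound
  have step2 : hammingDist (x (p + 1)) (x (p + (s : ZMod (4 * k + 6)))) ≤ s - 1 := by
    have hcast : p + (s : ZMod (4 * k + 6)) = (p + 1) + ((s - 1 : ℕ) : ZMod (4 * k + 6)) := by
      have hss : ((s : ℕ) : ZMod (4 * k + 6)) = ((s - 1 : ℕ) : ZMod (4 * k + 6)) + 1 := by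
        conv_lhs => rw [show s = (s - 1) + 1 by omega]
        rw [Nat.cast_add, Nat.cast_one]
      rw [hss]
      ring
    rw [hcast]
    exact steps_bound hx.adj (s - 1) (p + 1)
  -- step 3 : lower bound via spread
  have hvm : ((s + 1 : ℕ) : ZMod (4 * k + 6)).val = s + 1 := ZMod.val_cast_of_lt (by omega)
  have hmne : ((s + 1 : ℕ) : ZMod (4 * k + 6)) ≠ 0 := by
    intro h0
    rw [h0, ZMod.val_zero] at hvm
    omega
  have hcyc : cycDist p (p + (s : ZMod (4 * k + 6)) + 1) = s + 1 := by
    have h1 : p + (s : ZMod (4 * k + 6)) + 1 - p = ((s + 1 : ℕ) : ZMod (4 * k + 6)) := by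
      push_cast; ring
    have h2 : p - (p + (s : ZMod (4 * k + 6)) + 1) = -((s + 1 : ℕ) : ZMod (4 * k + 6)) := by
      push_cast; ring
    unfold cycDist
    rw [h1, h2, ZMod.neg_val, if_neg hmne, hvm]
    omega
  have hspread := hx.spread p (p + (s : ZMod (4 * k + 6)) + 1)
  have hdle := hyp_dist_le d (x p) (x (p + (s : ZMod (4 * k + 6)) + 1))
  rw [hcyc] at hspread
  rw [step1] at hdle
  have hmin : min (s + 1) k ≥ s := by omega
  omega

/-- For even `k ≥ 4`, `d = (3k+4)/2`, and a symmetric `(d,k)` circuit code of length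
`4k+6` whose transition sequence has the form `(ω₁, x, ω₂, ω₁, x, ω₂)` with
`ω₁ = (1,...,k+2)` and `ω₂ = (β₁,...,β_k)` (coordinates modeled 0-based as `Fin d`,
so the paper's coordinate `c` has value `c-1`, and `β_i` sits at position `k+2+i`):
`β_i > i` for `i = 1,...,k` (0-based: `val ≥ i`), and `β_j ∉ {j+3,...,k+2}` for
`j = 1,...,k-1` (0-based: `val ∉ [j+2, k+1]`). -/
theorem stmt_13 (k d : ℕ) (hk : Even k) (hk4 : 4 ≤ k) (hd : 2 * d = 3 * k + 4)
    (x : ZMod (4 * k + 6) → Fin d → Bool)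
    (hx : IsCircuitCode d k (4 * k + 6) x)
    (τ : ZMod (4 * k + 6) → Fin d) (hτ : IsTransitionSeq x τ)
    (hsym : ∀ i : ZMod (4 * k + 6), τ (i + ((2 * k + 3 : ℕ) : ZMod (4 * k + 6))) = τ i)
    (hω₁ : ∀ i : ℕ, i ≤ k + 1 → (τ ((i : ℕ) : ZMod (4 * k + 6))).val = i) :
    (∀ i : ℕ, 1 ≤ i → i ≤ k →
        i ≤ (τ ((k + 2 + i : ℕ) : ZMod (4 * k + 6))).val) ∧
    (∀ j : ℕ, 1 ≤ j → j ≤ k - 1 →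
        ¬ (j + 2 ≤ (τ ((k + 2 + j : ℕ) : ZMod (4 * k + 6))).val ∧
           (τ ((k + 2 + j : ℕ) : ZMod (4 * k + 6))).val ≤ k + 1)) := by
  constructor
  · -- part (a)
    intro i hi1 hik
    by_contra hcon
    push_neg at hcon
    set v := (τ ((k + 2 + i : ℕ) : ZMod (4 * k + 6))).val with hv
    have hvlt : v + 1 ≤ i := hcon
    set s := k + 1 + v - i with hs
    have hs1 : 1 ≤ s := by omega
    have hsk : s ≤ k := by omega
    apply keyD k d x hx τ hτ ((k + 2 + i : ℕ) : ZMod (4 * k + 6)) s hs1 hsk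
    have hadd : (k + 2 + i) + s = 2 * k + 3 + v := by omega
    have hc1 : ((k + 2 + i : ℕ) : ZMod (4 * k + 6)) + (s : ZMod (4 * k + 6))
        = ((2 * k + 3 + v : ℕ) : ZMod (4 * k + 6)) := by
      rw [← Nat.cast_add, hadd]
    rw [hc1]
    have hc2 : ((2 * k + 3 + v : ℕ) : ZMod (4 * k + 6))
        = ((v : ℕ) : ZMod (4 * k + 6)) + ((2 * k + 3 : ℕ) : ZMod (4 * k + 6)) := by
      push_cast; ring
    rw [hc2, hsym]
    apply Fin.val_injective
    rw [hω₁ v (by omega)]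
  · -- part (b)
    intro j hj1 hjk
    rintro ⟨hlo, hhi⟩
    set v := (τ ((k + 2 + j : ℕ) : ZMod (4 * k + 6))).val with hv
    set s := k + 2 + j - v with hs
    have hs1 : 1 ≤ s := by omega
    have hsk : s ≤ k := by omega
    apply keyD k d x hx τ hτ ((v : ℕ) : ZMod (4 * k + 6)) s hs1 hsk
    have hadd : v + s = k + 2 + j := by omega
    have hc1 : ((v : ℕ) : ZMod (4 * k + 6)) + (s : ZMod (4 * k + 6))
        = ((k + 2 + j : ℕ) : ZMod (4 * k + 6)) := by
      rw [← Nat.cast_add, hadd]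
    rw [hc1]
    apply Fin.val_injective
    rw [hω₁ v (by omega)]
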